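/- arXiv:1710.00296 — 7 statements merged into one kernel-verified Lean document; each statement's English description precedes it below -/
import Mathlib

section
/- Let n and k be integers with 1 ≤ k and 2k ≤ n, and let p(n,k) = (C(n−k,k) + k·C(n−k,k−1)) / C(n,k). Then p(n,k) = (∏_{i=0}^{k−1} (1 − k/(n−i))) · (1 + k²/(n−2k+1)). -/
/-- In the limited fork-join model, the probability `p(n,k)` that a job selecting `k`
distinct servers uniformly at random among `n` servers sends tasks to at most one server
from a fixed set of `k` servers satisfies the product identity from the proof of Lemma 1. -/
theorem stmt_0 (n k : ℕ) (hk : 1 ≤ k) (hkn : 2 * k ≤ n) :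
    ((Nat.choose (n - k) k : ℝ) + (k : ℝ) * (Nat.choose (n - k) (k - 1) : ℝ)) /
        (Nat.choose n k : ℝ)
      = (∏ i ∈ Finset.range k, (1 - (k : ℝ) / ((n : ℝ) - (i : ℝ)))) *
          (1 + (k : ℝ) ^ 2 / ((n : ℝ) - 2 * (k : ℝ) + 1)) := by
  have hkle : k ≤ n - k := by omega
  have hkn' : k ≤ n := by omega
  -- D := n - 2k + 1 > 0
  have hD : (0:ℝ) < (n : ℝ) - 2 * (k : ℝ) + 1 := by
    have : (2*k : ℝ) ≤ (n : ℝ) := by exact_mod_cast hkn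
    linarith
  set D : ℝ := (n : ℝ) - 2 * (k : ℝ) + 1 with hDdef
  -- key nat identity: choose (n-k) k * k = choose (n-k) (k-1) * (n-2k+1)
  have hnat : Nat.choose (n-k) k * k = Nat.choose (n-k) (k-1) * (n - 2*k + 1) := by
    have h := Nat.choose_succ_right_eq (n-k) (k-1)
    have hk1 : k - 1 + 1 = k := by omega
    rw [hk1] at h
    have : n - k - (k-1) = n - 2*k + 1 := by omega
    rw [this] at h
    exact h
  have hcast : ((n - 2*k + 1 : ℕ) : ℝ) = D := by
    have : ((n - 2*k : ℕ) : ℝ) = (n:ℝ) - 2*(k:ℝ) := by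
      have : 2*k ≤ n := hkn
      push_cast [this]; ring
    push_cast [this]; rw [hDdef]
  have hreal : (Nat.choose (n-k) k : ℝ) * k = (Nat.choose (n-k) (k-1) : ℝ) * D := by
    have := congrArg (fun m : ℕ => (m : ℝ)) hnat
    push_cast at this
    rw [← hcast]; push_cast; linarith [this]
  -- product identity
  have hprod : (∏ i ∈ Finset.range k, (1 - (k : ℝ) / ((n : ℝ) - (i : ℝ))))
      = ((n-k).descFactorial k : ℝ) / (n.descFactorial k : ℝ) := by
    rw [Nat.descFactorial_eq_prod_range, Nat.descFactorial_eq_prod_range]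
    push_cast
    rw [← Finset.prod_div_distrib]
    apply Finset.prod_congr rfl
    intro i hi
    have hi' : i < k := Finset.mem_range.mp hi
    have h1 : ((n - k - i : ℕ) : ℝ) = (n:ℝ) - (k:ℝ) - (i:ℝ) := by
      have : i ≤ n - k := by omega
      have h2 : k ≤ n := hkn'
      push_cast [Nat.sub_sub, Nat.cast_sub (by omega : k + i ≤ n)]
      ring
    have h2 : ((n - i : ℕ) : ℝ) = (n:ℝ) - (i:ℝ) := by
      push_cast [Nat.cast_sub (by omega : i ≤ n)]; ring
    rw [h1, h2]
    have hni : (n:ℝ) - (i:ℝ) ≠ 0 := by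
      have : (i:ℝ) < (n:ℝ) := by exact_mod_cast (by omega : i < n)
      linarith
    field_simp
    ring
  -- descFactorial ratio = choose ratio
  have hchoose : ((n-k).descFactorial k : ℝ) / (n.descFactorial k : ℝ)
      = (Nat.choose (n-k) k : ℝ) / (Nat.choose n k : ℝ) := by
    rw [Nat.descFactorial_eq_factorial_mul_choose, Nat.descFactorial_eq_factorial_mul_choose]
    push_cast
    have hf : (k.factorial : ℝ) ≠ 0 := by exact_mod_cast k.factorial_ne_zero
    have hc : (Nat.choose n k : ℝ) ≠ 0 := by
      exact_mod_cast Nat.choose_pos hkn' |>.ne'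
    field_simp
  rw [hprod, hchoose]
  have hc : (Nat.choose n k : ℝ) ≠ 0 := by
    exact_mod_cast Nat.choose_pos hkn' |>.ne'
  field_simp
  linear_combination (-(k:ℝ)) * hreal
end

section
/- Let n and k be integers with 1 ≤ k and 2k ≤ n, and let p(n,k) = (C(n−k,k) + k·C(n−k,k−1)) / C(n,k). Then p(n,k) ≥ (1 − k/(n−k+1))^k · (1 + k²/(n−k+1)). -/
open Finset

/-- Lower bound on the probability `p(n,k)` from the proof of Lemma 1 of the paper. -/
theorem stmt_1 (n k : ℕ) (hk : 1 ≤ k) (hkn : 2 * k ≤ n) :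
    ((Nat.choose (n - k) k : ℝ) + (k : ℝ) * (Nat.choose (n - k) (k - 1) : ℝ)) /
        (Nat.choose n k : ℝ)
      ≥ (1 - (k : ℝ) / ((n : ℝ) - (k : ℝ) + 1)) ^ k *
          (1 + (k : ℝ) ^ 2 / ((n : ℝ) - (k : ℝ) + 1)) := by
  have hkn'' : k ≤ n := by omega
  set m := n - k with hm
  have hkm : k ≤ m := by omega
  have hmr : (m : ℝ) = (n : ℝ) - k := by
    rw [hm, Nat.cast_sub hkn'']
  set N : ℝ := (n : ℝ) - (k : ℝ) + 1 with hN
  have hnk : (k : ℝ) ≤ (n : ℝ) := by exact_mod_cast hkn''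
  have hnk2 : (2 * k : ℝ) ≤ (n : ℝ) := by exact_mod_cast hkn
  have hk1 : (1 : ℝ) ≤ (k : ℝ) := by exact_mod_cast hk
  have hNpos : 0 < N := by rw [hN]; linarith
  set c : ℝ := (k : ℝ) / N with hc
  have hc1 : 0 ≤ 1 - c := by
    have : c ≤ 1 := by rw [hc, div_le_one hNpos, hN]; linarith
    linarith
  have hprod : (1 - c) ^ k * ∏ i ∈ range k, ((n : ℝ) - i) ≤ ∏ i ∈ range k, ((m : ℝ) - i) := by
    have hmain : ∀ i ∈ range k, (1 - c) * ((n : ℝ) - i) ≤ (m : ℝ) - i := by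
      intro i hi
      have hik : i + 1 ≤ k := mem_range.mp hi
      have hi' : (i : ℝ) + 1 ≤ (k : ℝ) := by exact_mod_cast hik
      rw [hmr, hc]
      have h1 : N ≤ (n : ℝ) - i := by rw [hN]; linarith
      have h2 : (k : ℝ) ≤ (k : ℝ) / N * ((n : ℝ) - i) := by
        rw [div_mul_eq_mul_div, le_div_iff₀ hNpos]
        nlinarith
      nlinarith
    have hnn : ∀ i ∈ range k, 0 ≤ (1 - c) * ((n : ℝ) - i) := by
      intro i hi
      have hik : i + 1 ≤ k := mem_range.mp hi
      have hi' : (i : ℝ) + 1 ≤ (k : ℝ) := by exact_mod_cast hik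
      exact mul_nonneg hc1 (by linarith)
    calc (1 - c) ^ k * ∏ i ∈ range k, ((n : ℝ) - i)
        = ∏ i ∈ range k, (1 - c) * ((n : ℝ) - i) := by
          rw [Finset.prod_mul_distrib, Finset.prod_const, Finset.card_range]
      _ ≤ _ := Finset.prod_le_prod hnn hmain
  have hcastm : (↑(m.descFactorial k) : ℝ) = ∏ i ∈ range k, ((m : ℝ) - i) := by
    rw [Nat.descFactorial_eq_prod_range, Nat.cast_prod]
    exact Finset.prod_congr rfl fun i hi =>
      Nat.cast_sub (by have := mem_range.mp hi; omega)
  have hcastn : (↑(n.descFactorial k) : ℝ) = ∏ i ∈ range k, ((n : ℝ) - i) := by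
    rw [Nat.descFactorial_eq_prod_range, Nat.cast_prod]
    exact Finset.prod_congr rfl fun i hi =>
      Nat.cast_sub (by have := mem_range.mp hi; omega)
  have hA : (1 - c) ^ k * (n.choose k : ℝ) ≤ (m.choose k : ℝ) := by
    have hfac : (0 : ℝ) < (Nat.factorial k : ℝ) := by exact_mod_cast k.factorial_pos
    have h1 : (↑(m.descFactorial k) : ℝ) = (Nat.factorial k : ℝ) * (m.choose k : ℝ) := by
      rw [Nat.descFactorial_eq_factorial_mul_choose]; push_cast; ring
    have h2 : (↑(n.descFactorial k) : ℝ) = (Nat.factorial k : ℝ) * (n.choose k : ℝ) := by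
      rw [Nat.descFactorial_eq_factorial_mul_choose]; push_cast; ring
    have h3 := hprod
    rw [← hcastm, ← hcastn, h1, h2] at h3
    nlinarith [pow_nonneg hc1 k]
  have hid : (m.choose k : ℝ) * k = (m.choose (k - 1) : ℝ) * ((m : ℝ) - ((k : ℝ) - 1)) := by
    have h := Nat.choose_succ_right_eq m (k - 1)
    have hk' : k - 1 + 1 = k := by omega
    rw [hk'] at h
    have h' : ((m.choose k * k : ℕ) : ℝ) = ((m.choose (k - 1) * (m - (k - 1)) : ℕ) : ℝ) := by
      exact_mod_cast h
    push_cast [Nat.cast_sub (by omega : k - 1 ≤ m), Nat.cast_sub hk] at h'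
    linarith
  have hDpos : (0 : ℝ) < (n.choose k : ℝ) := by exact_mod_cast Nat.choose_pos hkn''
  have hApos : (0 : ℝ) ≤ (m.choose k : ℝ) := by positivity
  have hB : (k : ℝ) ^ 2 * (m.choose k : ℝ) / N ≤ (k : ℝ) * (m.choose (k - 1) : ℝ) := by
    rw [div_le_iff₀ hNpos]
    have hle : (m : ℝ) - ((k : ℝ) - 1) ≤ N := by rw [hmr, hN]; linarith
    have hBnn : (0 : ℝ) ≤ (m.choose (k - 1) : ℝ) := by positivity
    have e1 : (k : ℝ) ^ 2 * (m.choose k : ℝ)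
        = (k : ℝ) * ((m.choose (k - 1) : ℝ) * ((m : ℝ) - ((k : ℝ) - 1))) := by
      rw [← hid]; ring
    have e2 : (k : ℝ) * ((m.choose (k - 1) : ℝ) * ((m : ℝ) - ((k : ℝ) - 1)))
        ≤ (k : ℝ) * ((m.choose (k - 1) : ℝ) * N) :=
      mul_le_mul_of_nonneg_left (mul_le_mul_of_nonneg_left hle hBnn) (by linarith)
    calc (k : ℝ) ^ 2 * (m.choose k : ℝ) ≤ (k : ℝ) * ((m.choose (k - 1) : ℝ) * N) := by
          rw [e1]; exact e2
      _ = (k : ℝ) * (m.choose (k - 1) : ℝ) * N := by ring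
  rw [ge_iff_le, le_div_iff₀ hDpos]
  have hksq : (0 : ℝ) ≤ (k : ℝ) ^ 2 / N := by positivity
  have step2 : (k : ℝ) ^ 2 / N * ((1 - c) ^ k * (n.choose k : ℝ))
      ≤ (k : ℝ) ^ 2 / N * (m.choose k : ℝ) := mul_le_mul_of_nonneg_left hA hksq
  have hB' : (k : ℝ) ^ 2 / N * (m.choose k : ℝ) ≤ (k : ℝ) * (m.choose (k - 1) : ℝ) := by
    rw [div_mul_eq_mul_div]
    exact hB
  have expand : (1 - c) ^ k * (1 + (k : ℝ) ^ 2 / N) * (n.choose k : ℝ)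
      = (1 - c) ^ k * (n.choose k : ℝ)
        + (k : ℝ) ^ 2 / N * ((1 - c) ^ k * (n.choose k : ℝ)) := by ring
  rw [expand]
  linarith [step2, hB', hA]
end

section
/- Let n and k be integers with 1 ≤ k and 2k ≤ n, and let p(n,k) = (C(n−k,k) + k·C(n−k,k−1)) / C(n,k). Then 1 − p(n,k) ≤ k⁴ / (n−k+1)². -/
/-- Explicit-constant version of the bound `1 - p(n,k) = O(k⁴/(n-k+1)²)` from the proof of
Lemma 1 of the paper. -/
theorem stmt_2 (n k : ℕ) (hk : 1 ≤ k) (hkn : 2 * k ≤ n) :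
    1 - ((Nat.choose (n - k) k : ℝ) + (k : ℝ) * (Nat.choose (n - k) (k - 1) : ℝ)) /
          (Nat.choose n k : ℝ)
      ≤ (k : ℝ) ^ 4 / ((n : ℝ) - (k : ℝ) + 1) ^ 2 := by
  obtain ⟨j, rfl⟩ : ∃ j, k = j + 1 := ⟨k - 1, by omega⟩
  obtain ⟨m, rfl⟩ : ∃ m, n = m + (j + 1) := ⟨n - (j + 1), by omega⟩
  have hmk : j + 1 ≤ m := by omega
  -- Vandermonde's identity
  have hv : (m + (j + 1)).choose (j + 1)
      = ∑ i ∈ Finset.range (j + 2), (j + 1).choose i * m.choose (j + 1 - i) := by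
    rw [Nat.add_comm m, Nat.add_choose_eq,
      Finset.Nat.sum_antidiagonal_eq_sum_range_succ
        (fun a b => (j + 1).choose a * m.choose b)]
  set D : ℕ := ∑ i ∈ Finset.range j, (j + 1).choose (i + 1 + 1) * m.choose (j + 1 - (i + 1 + 1))
    with hD
  have hsplit : (m + (j + 1)).choose (j + 1)
      = m.choose (j + 1) + (j + 1) * m.choose j + D := by
    rw [hv, Finset.sum_range_succ', Finset.sum_range_succ']
    simp only [Nat.choose_zero_right, one_mul, Nat.sub_zero, Nat.zero_add,
      Nat.choose_one_right, Nat.add_sub_cancel]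
    omega
  -- key nat inequality
  have hkey : D * (m + 1) ^ 2 ≤ (m + (j + 1)).choose (j + 1) * (j + 1) ^ 4 := by
    rcases Nat.eq_zero_or_pos j with hj0 | hjpos
    · subst hj0; simp [hD]
    obtain ⟨j', rfl⟩ : ∃ j', j = j' + 1 := ⟨j - 1, by omega⟩
    set B : ℕ := (m + (j' + 2)).choose (j' + 2) with hB
    set S : ℕ := (m + j').choose j' with hS
    set c : ℕ := (j' + 2).choose 2 with hc
    -- bound D ≤ c * S
    have hDle : D ≤ c * S := by
      have hsum : D ≤ ∑ i ∈ Finset.range (j' + 1),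
          c * ((j').choose i * m.choose (j' - i)) := by
        apply Finset.sum_le_sum
        intro i hi
        have hi' : i ≤ j' := Nat.lt_succ_iff.mp (Finset.mem_range.mp hi)
        have hsimp : j' + 1 + 1 - (i + 1 + 1) = j' - i := by omega
        rw [hsimp]
        show (j' + 2).choose (i + 2) * m.choose (j' - i)
            ≤ c * ((j').choose i * m.choose (j' - i))
        have hiden : (j' + 2).choose (i + 2) ≤ c * (j').choose i := by
          have h := Nat.choose_mul (n := j' + 2) (k := i + 2) (s := 2)
            (by omega)
          have h2 : 1 ≤ (i + 2).choose 2 := Nat.choose_pos (by omega)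
          calc (j' + 2).choose (i + 2) ≤ (j' + 2).choose (i + 2) * (i + 2).choose 2 :=
                Nat.le_mul_of_pos_right _ h2
            _ = (j' + 2).choose 2 * (j' + 2 - 2).choose (i + 2 - 2) := h
            _ = c * (j').choose i := rfl
        calc (j' + 2).choose (i + 2) * m.choose (j' - i)
            ≤ c * (j').choose i * m.choose (j' - i) :=
              Nat.mul_le_mul_right _ hiden
          _ = c * ((j').choose i * m.choose (j' - i)) := by ring
      have hvand2 : ∑ i ∈ Finset.range (j' + 1), (j').choose i * m.choose (j' - i)
          = S := by
        rw [hS, Nat.add_comm m, Nat.add_choose_eq,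
          Finset.Nat.sum_antidiagonal_eq_sum_range_succ
            (fun a b => (j').choose a * m.choose b)]
      calc D ≤ ∑ i ∈ Finset.range (j' + 1), c * ((j').choose i * m.choose (j' - i)) := hsum
        _ = c * ∑ i ∈ Finset.range (j' + 1), (j').choose i * m.choose (j' - i) := by
            rw [Finset.mul_sum]
        _ = c * S := by rw [hvand2]
    -- identities
    have h1 : (m + j' + 2) * (m + j' + 1).choose (j' + 1) = B * (j' + 2) := by
      have h := Nat.add_one_mul_choose_eq (m + j' + 1) (j' + 1)
      exact h
    have h2 : (m + j' + 1) * S = (m + j' + 1).choose (j' + 1) * (j' + 1) := by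
      have h := Nat.add_one_mul_choose_eq (m + j') j'
      exact h
    have h3 : 2 * c = (j' + 2) * (j' + 1) := by
      have h := Nat.add_one_mul_choose_eq (j' + 1) 1
      simp only [Nat.succ_eq_add_one, Nat.choose_one_right] at h
      have e : (j' + 1 + 1).choose (1 + 1) = c := rfl
      rw [← e]
      linarith [h]
    have hBS : (m + j' + 2) * ((m + j' + 1) * S) = B * (j' + 2) * (j' + 1) := by
      rw [h2, ← Nat.mul_assoc, h1]
    -- main product inequality
    have hmain : c * S * (m + 1) ^ 2 ≤ B * (j' + 2) ^ 4 := by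
      have hc2 : 0 < 2 * (m + j' + 2) * (m + j' + 1) := by positivity
      apply Nat.le_of_mul_le_mul_right _ hc2
      have lhs_eq : c * S * (m + 1) ^ 2 * (2 * (m + j' + 2) * (m + j' + 1))
          = (2 * c) * (m + 1) ^ 2 * ((m + j' + 2) * ((m + j' + 1) * S)) := by ring
      rw [lhs_eq, h3, hBS]
      have e1 : (j' + 1) * (j' + 1) ≤ (j' + 2) * (j' + 2) :=
        Nat.mul_le_mul (by omega) (by omega)
      have e2 : (m + 1) * (m + 1) ≤ (m + j' + 2) * (m + j' + 1) :=
        Nat.mul_le_mul (by omega) (by omega)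
      calc (j' + 2) * (j' + 1) * (m + 1) ^ 2 * (B * (j' + 2) * (j' + 1))
          = B * ((j' + 2) * (j' + 2)) * (((j' + 1) * (j' + 1)) * ((m + 1) * (m + 1))) := by
            ring
        _ ≤ B * ((j' + 2) * (j' + 2)) * (((j' + 2) * (j' + 2)) * ((m + j' + 2) * (m + j' + 1))) :=
            Nat.mul_le_mul_left _ (Nat.mul_le_mul e1 e2)
        _ = B * (j' + 2) ^ 4 * ((m + j' + 2) * (m + j' + 1)) := by ring
        _ ≤ B * (j' + 2) ^ 4 * (2 * ((m + j' + 2) * (m + j' + 1))) :=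
            Nat.mul_le_mul_left _ (by omega)
        _ = B * (j' + 2) ^ 4 * (2 * (m + j' + 2) * (m + j' + 1)) := by ring
    calc D * (m + 1) ^ 2 ≤ c * S * (m + 1) ^ 2 := Nat.mul_le_mul_right _ hDle
      _ ≤ B * (j' + 2) ^ 4 := hmain
      _ = (m + (j' + 1 + 1)).choose (j' + 1 + 1) * (j' + 1 + 1) ^ 4 := rfl
  -- assemble over ℝ
  have hnk : m + (j + 1) - (j + 1) = m := by omega
  have hk1 : j + 1 - 1 = j := by omega
  rw [hnk, hk1]
  set B : ℕ := (m + (j + 1)).choose (j + 1) with hB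
  have hBpos : 0 < B := Nat.choose_pos (by omega)
  have hBR : (0:ℝ) < (B : ℝ) := by exact_mod_cast hBpos
  have hcast : ((m + (j + 1) : ℕ) : ℝ) - ((j + 1 : ℕ) : ℝ) + 1 = (m : ℝ) + 1 := by
    push_cast; ring
  rw [hcast]
  have hBA : (B : ℝ) = (m.choose (j + 1) : ℝ) + ((j : ℝ) + 1) * (m.choose j : ℝ) + (D : ℝ) := by
    have := congrArg (Nat.cast (R := ℝ)) hsplit
    push_cast at this
    exact this
  have hsub : 1 - ((m.choose (j + 1) : ℝ) + ((j + 1 : ℕ) : ℝ) * (m.choose j : ℝ)) / (B : ℝ)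
      = (D : ℝ) / (B : ℝ) := by
    field_simp
    push_cast
    linarith [hBA]
  rw [hsub, div_le_div_iff₀ hBR (by positivity)]
  have hcast2 : (D : ℝ) * ((m : ℝ) + 1) ^ 2 ≤ (B : ℝ) * ((j : ℝ) + 1) ^ 4 := by
    have h := (Nat.cast_le (α := ℝ)).mpr hkey
    push_cast at h
    convert h using 2
  push_cast
  linarith [hcast2]
end

section
/- Let λ > 0 and c > 0 be reals, and let n and k be integers with 1 ≤ k and 2k ≤ n. Let p(n,k) = (C(n−k,k) + k·C(n−k,k−1)) / C(n,k), Λ = nλ/k, and τ = c√n / k. Then 1 − exp(−Λ·τ·(1 − p(n,k))) ≤ 4cλk²/√n. -/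
open Finset

/-- Vandermonde's identity as a range sum. -/
lemma vand_range (a b t : ℕ) :
    (a + b).choose t = ∑ i ∈ Finset.range (t + 1), a.choose i * b.choose (t - i) := by
  rw [Nat.add_choose_eq]
  exact Finset.Nat.sum_antidiagonal_eq_sum_range_succ (fun i j => a.choose i * b.choose j) t

/-- `i(i-1) C(k,i) = k(k-1) C(k-2, i-2)` in shifted form. -/
lemma term_ident (kk j : ℕ) :
    (2 + j) * (2 + j - 1) * (kk + 2).choose (2 + j) = (kk + 2) * (kk + 1) * kk.choose j := by
  have h1 := Nat.add_one_mul_choose_eq (kk + 1) (j + 1)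
  have h2 := Nat.add_one_mul_choose_eq kk j
  rw [show 2 + j - 1 = j + 1 by omega, show 2 + j = j + 2 by omega]
  rw [show (j + 2) * (j + 1) = (j + 2) * (j + 1) from rfl]
  calc (j + 2) * (j + 1) * (kk + 2).choose (j + 2)
      = ((kk + 1 + 1).choose (j + 1 + 1) * (j + 1 + 1)) * (j + 1) := by ring
    _ = ((kk + 2) * (kk + 1).choose (j + 1)) * (j + 1) := by rw [← h1]
    _ = (kk + 2) * ((kk + 1).choose (j + 1) * (j + 1)) := by ring
    _ = (kk + 2) * ((kk + 1) * kk.choose j) := by rw [← h2]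
    _ = (kk + 2) * (kk + 1) * kk.choose j := by ring

/-- `n(n-1) C(n-2, k-2) = k(k-1) C(n,k)` in shifted form. -/
lemma two_step (nn kk : ℕ) :
    (nn + 2) * (nn + 1) * nn.choose kk = (kk + 2) * (kk + 1) * (nn + 2).choose (kk + 2) := by
  have h1 := Nat.add_one_mul_choose_eq (nn + 1) (kk + 1)
  have h2 := Nat.add_one_mul_choose_eq nn kk
  calc (nn + 2) * (nn + 1) * nn.choose kk
      = (nn + 2) * ((nn + 1) * nn.choose kk) := by ring
    _ = (nn + 2) * ((nn + 1).choose (kk + 1) * (kk + 1)) := by rw [h2]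
    _ = ((nn + 2) * (nn + 1).choose (kk + 1)) * (kk + 1) := by ring
    _ = ((nn + 2).choose (kk + 2) * (kk + 2)) * (kk + 1) := by rw [h1]
    _ = (kk + 2) * (kk + 1) * (nn + 2).choose (kk + 2) := by ring

lemma key_nat (n k : ℕ) (hk : 1 ≤ k) (hkn : 2 * k ≤ n) :
    ∃ S : ℕ, (n - k).choose k + k * ((n - k).choose (k - 1)) + S = n.choose k ∧
      n ^ 2 * S ≤ k ^ 4 * n.choose k := by
  obtain ⟨m, rfl⟩ : ∃ m, n = m + k := ⟨n - k, by omega⟩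
  have hmk : k ≤ m := by omega
  have hmksub : m + k - k = m := by omega
  rw [hmksub]
  set f : ℕ → ℕ := fun i => k.choose i * m.choose (k - i) with hf
  refine ⟨∑ i ∈ Finset.Ico 2 (k + 1), f i, ?_, ?_⟩
  · have hA : (m + k).choose k = ∑ i ∈ Finset.range (k + 1), f i := by
      rw [Nat.add_comm m k, vand_range]
    have hsplit : ∑ i ∈ Finset.range (k + 1), f i
        = f 0 + f 1 + ∑ i ∈ Finset.Ico 2 (k + 1), f i := by
      rw [Finset.range_eq_Ico, Finset.sum_eq_sum_Ico_succ_bot (by omega) f,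
        Finset.sum_eq_sum_Ico_succ_bot (by omega) f, ← Nat.add_assoc]
    rw [hA, hsplit]
    simp [hf, Nat.choose_one_right]
  · rcases Nat.lt_or_ge k 2 with hk2 | hk2
    · have hk1 : k = 1 := by omega
      subst hk1
      simp
    -- k ≥ 2 case
    obtain ⟨kk, rfl⟩ : ∃ kk, k = kk + 2 := ⟨k - 2, by omega⟩
    set S := ∑ i ∈ Finset.Ico 2 (kk + 2 + 1), f i with hS
    have hstep1 : 2 * S ≤ ∑ i ∈ Finset.Ico 2 (kk + 2 + 1), i * (i - 1) * f i := by
      rw [hS, Finset.mul_sum]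
      apply Finset.sum_le_sum
      intro i hi
      have h2i : 2 ≤ i := (Finset.mem_Ico.mp hi).1
      have : 2 ≤ i * (i - 1) := by
        calc 2 = 2 * 1 := rfl
        _ ≤ i * (i - 1) := Nat.mul_le_mul h2i (by omega)
      exact Nat.mul_le_mul_right _ this
    have hstep2 : ∑ i ∈ Finset.Ico 2 (kk + 2 + 1), i * (i - 1) * f i
        = (kk + 2) * (kk + 1) * (m + kk).choose kk := by
      rw [Finset.sum_Ico_eq_sum_range]
      have hbound : kk + 2 + 1 - 2 = kk + 1 := by omega
      rw [hbound]
      have hterm : ∀ j ∈ Finset.range (kk + 1),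
          (2 + j) * (2 + j - 1) * f (2 + j)
            = (kk + 2) * (kk + 1) * (kk.choose j * m.choose (kk - j)) := by
        intro j hj
        simp only [hf]
        have hsub : kk + 2 - (2 + j) = kk - j := by omega
        rw [hsub, ← Nat.mul_assoc, ← Nat.mul_assoc]
        rw [show (2 + j) * (2 + j - 1) * (kk + 2).choose (2 + j) * m.choose (kk - j)
          = ((2 + j) * (2 + j - 1) * (kk + 2).choose (2 + j)) * m.choose (kk - j) from rfl]
        rw [term_ident]
      rw [Finset.sum_congr rfl hterm, ← Finset.mul_sum]
      congr 1
      rw [show m + kk = kk + m by omega, vand_range kk m kk]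
    have hstep3 : (m + kk + 2) * (m + kk + 1) * (m + kk).choose kk
        = (kk + 2) * (kk + 1) * (m + kk + 2).choose (kk + 2) := two_step (m + kk) kk
    -- assemble
    have hS2 : 2 * S ≤ (kk + 2) * (kk + 1) * (m + kk).choose kk := hstep1.trans hstep2.le
    set n' := m + (kk + 2) with hn'
    have hnn : n' = m + kk + 2 := by omega
    have hA : n' ^ 2 ≤ 2 * (n' * (n' - 1)) := by
      rw [hnn, show m + kk + 2 - 1 = m + kk + 1 by omega]
      nlinarith
    have hprod : n' * (n' - 1) = (m + kk + 2) * (m + kk + 1) := by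
      rw [hnn, show m + kk + 2 - 1 = m + kk + 1 by omega]
    have hcc : (kk + 2) * (kk + 1) * ((kk + 2) * (kk + 1))
        ≤ (kk + 2) * (kk + 2) * ((kk + 2) * (kk + 2)) := by
      have h := Nat.le_succ (kk + 1)
      exact Nat.mul_le_mul (Nat.mul_le_mul_left _ h) (Nat.mul_le_mul_left _ h)
    calc n' ^ 2 * S ≤ 2 * (n' * (n' - 1)) * S := Nat.mul_le_mul_right _ hA
      _ = (n' * (n' - 1)) * (2 * S) := by ring
      _ = ((m + kk + 2) * (m + kk + 1)) * (2 * S) := by rw [hprod]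
      _ ≤ ((m + kk + 2) * (m + kk + 1)) * ((kk + 2) * (kk + 1) * (m + kk).choose kk) :=
          Nat.mul_le_mul_left _ hS2
      _ = (kk + 2) * (kk + 1) * ((m + kk + 2) * (m + kk + 1) * (m + kk).choose kk) := by ring
      _ = (kk + 2) * (kk + 1) * ((kk + 2) * (kk + 1) * (m + kk + 2).choose (kk + 2)) := by
          rw [hstep3]
      _ = ((kk + 2) * (kk + 1) * ((kk + 2) * (kk + 1))) * (m + kk + 2).choose (kk + 2) := by
          ring
      _ ≤ ((kk + 2) * (kk + 2) * ((kk + 2) * (kk + 2))) * (m + kk + 2).choose (kk + 2) :=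
          Nat.mul_le_mul_right _ hcc
      _ = (kk + 2) ^ 4 * n'.choose (kk + 2) := by rw [hnn]; ring

/-- Explicit-constant version of the bound `P(E) = O((k/n^{1/4})²)` from Lemma 1 of the paper,
with `Λ = nλ/k` and `τ = c√n/k`. -/
theorem stmt_4 (lam c : ℝ) (hlam : 0 < lam) (hc : 0 < c) (n k : ℕ)
    (hk : 1 ≤ k) (hkn : 2 * k ≤ n) :
    1 - Real.exp (-(((n : ℝ) * lam / (k : ℝ)) * (c * Real.sqrt (n : ℝ) / (k : ℝ)) *
          (1 - ((Nat.choose (n - k) k : ℝ) + (k : ℝ) * (Nat.choose (n - k) (k - 1) : ℝ)) /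
              (Nat.choose n k : ℝ))))
      ≤ 4 * c * lam * (k : ℝ) ^ 2 / Real.sqrt (n : ℝ) := by
  obtain ⟨S, hsum, hineq⟩ := key_nat n k hk hkn
  have hn2 : 2 ≤ n := by omega
  have hN : (0 : ℝ) < (n.choose k : ℝ) := by
    exact_mod_cast Nat.choose_pos (by omega : k ≤ n)
  have hnpos : (0 : ℝ) < (n : ℝ) := by exact_mod_cast (by omega : 0 < n)
  have hkpos : (0 : ℝ) < (k : ℝ) := by exact_mod_cast hk
  have hs : 0 < Real.sqrt (n : ℝ) := Real.sqrt_pos.mpr hnpos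
  have hss : Real.sqrt (n : ℝ) * Real.sqrt (n : ℝ) = (n : ℝ) :=
    Real.mul_self_sqrt hnpos.le
  have hcast : ((Nat.choose (n - k) k : ℝ) + (k : ℝ) * (Nat.choose (n - k) (k - 1) : ℝ)) + S
      = (Nat.choose n k : ℝ) := by exact_mod_cast hsum
  have hp : 1 - ((Nat.choose (n - k) k : ℝ) + (k : ℝ) * (Nat.choose (n - k) (k - 1) : ℝ)) /
      (Nat.choose n k : ℝ) = (S : ℝ) / (Nat.choose n k : ℝ) := by
    field_simp
    linarith
  rw [hp]
  have h1 : ∀ y : ℝ, 1 - Real.exp (-y) ≤ y := by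
    intro y
    nlinarith [Real.add_one_le_exp (-y)]
  refine (h1 _).trans ?_
  have hkey : (n : ℝ) ^ 2 * S ≤ (k : ℝ) ^ 4 * (Nat.choose n k : ℝ) := by exact_mod_cast hineq
  rw [div_mul_div_comm, div_mul_div_comm, div_le_div_iff₀ (by positivity) hs]
  calc (n : ℝ) * lam * (c * Real.sqrt n) * ↑S * Real.sqrt n
      = lam * c * ((n : ℝ) * (Real.sqrt n * Real.sqrt n) * ↑S) := by ring
    _ = lam * c * ((n : ℝ) ^ 2 * ↑S) := by rw [hss]; ring
    _ ≤ lam * c * ((k : ℝ) ^ 4 * ↑(n.choose k)) := by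
        exact mul_le_mul_of_nonneg_left hkey (by positivity)
    _ ≤ 4 * (lam * c * ((k : ℝ) ^ 4 * ↑(n.choose k))) := by
        nlinarith [mul_pos (mul_pos hlam hc) (mul_pos (pow_pos hkpos 4) hN)]
    _ = 4 * c * lam * (k : ℝ) ^ 2 * ((k : ℝ) * (k : ℝ) * ↑(n.choose k)) := by ring
end

section
/- For all integers n and k with 1 ≤ k ≤ n, k²/n − k⁴/(2n²) ≤ 1 − C(n−k,k)/C(n,k) ≤ k²/n, where C(n−k,k) is interpreted as 0 when k > n−k. -/
private lemma descA (n k : ℕ) (hk : 1 ≤ k) (hkn : k ≤ n) :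
    ∀ m, m ≤ k → (1 - (m:ℝ)*k/n) * (n.descFactorial m : ℝ) ≤ ((n-k).descFactorial m : ℝ) := by
  have hn : (0:ℝ) < n := by exact_mod_cast lt_of_lt_of_le hk hkn
  intro m
  induction m with
  | zero => simp
  | succ m ih =>
    intro hm
    have ih' := ih (by omega)
    rw [Nat.descFactorial_succ, Nat.descFactorial_succ]
    push_cast
    by_cases hpos : (1:ℝ) - (m+1)*k/n ≤ 0
    · have h1 : (0:ℝ) ≤ ((n-k-m : ℕ) : ℝ) * ((n-k).descFactorial m : ℝ) := by positivity
      have h2 : (0:ℝ) ≤ ((n-m : ℕ) : ℝ) * (n.descFactorial m : ℝ) := by positivity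
      have h3 := mul_nonpos_of_nonpos_of_nonneg hpos h2
      linarith
    · push_neg at hpos
      have hmk : (0:ℝ) < 1 - (m:ℝ)*k/n := by
        have h0 : (0:ℝ) ≤ (k:ℝ)/n := by positivity
        have he : ((m:ℝ)+1)*k/n = (m:ℝ)*k/n + k/n := by ring
        linarith
      have hsub1 : ((n - m : ℕ) : ℝ) = (n:ℝ) - m := by
        have : m ≤ n := by omega
        exact Nat.cast_sub this
      have hsub2 : (n:ℝ) - k - m ≤ ((n - k - m : ℕ) : ℝ) := by
        by_cases h : k + m ≤ n
        · have : ((n - k - m : ℕ) : ℝ) = (n:ℝ) - k - m := by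
            have e : n - k - m = n - (k+m) := by omega
            rw [e]
            have := Nat.cast_sub (R := ℝ) h
            push_cast at this ⊢
            linarith
          linarith
        · have e : n - k - m = 0 := by omega
          rw [e]
          push_cast
          have hkr : (k:ℝ) + m > n := by exact_mod_cast Nat.lt_of_not_le h
          linarith
      -- key real inequality
      have key : (1 - ((m:ℝ)+1)*k/n) * ((n:ℝ) - m) ≤ (1 - (m:ℝ)*k/n) * ((n - k - m : ℕ) : ℝ) := by
        have h2 : (1 - (m:ℝ)*k/n) * ((n:ℝ) - k - m) ≤ (1 - (m:ℝ)*k/n) * ((n - k - m : ℕ) : ℝ) :=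
          mul_le_mul_of_nonneg_left hsub2 (le_of_lt hmk)
        have h3 : (1 - ((m:ℝ)+1)*k/n) * ((n:ℝ) - m) ≤ (1 - (m:ℝ)*k/n) * ((n:ℝ) - k - m) := by
          rw [div_eq_mul_inv, div_eq_mul_inv]
          have hk1 : (1:ℝ) ≤ k := by exact_mod_cast hk
          have hm0 : (0:ℝ) ≤ m := Nat.cast_nonneg m
          have hninv : (0:ℝ) < (n:ℝ)⁻¹ := by positivity
          have hexp : ((n:ℝ) - (m+1)*k) * ((n:ℝ) - m) ≤ ((n:ℝ) - m*k) * ((n:ℝ) - k - m) := by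
            have hk0 : (0:ℝ) ≤ k := Nat.cast_nonneg k
            have hmk1 : (0:ℝ) ≤ (m:ℝ)*k*((k:ℝ)-1) :=
              mul_nonneg (mul_nonneg hm0 hk0) (by linarith)
            nlinarith [hmk1]
          calc (1 - ((m:ℝ)+1)*k*(n:ℝ)⁻¹) * ((n:ℝ) - m)
              = (((n:ℝ) - (m+1)*k) * ((n:ℝ) - m)) * (n:ℝ)⁻¹ := by field_simp
            _ ≤ (((n:ℝ) - m*k) * ((n:ℝ) - k - m)) * (n:ℝ)⁻¹ :=
                mul_le_mul_of_nonneg_right hexp (le_of_lt hninv)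
            _ = (1 - (m:ℝ)*k*(n:ℝ)⁻¹) * ((n:ℝ) - k - m) := by field_simp
        linarith
      have hD : (0:ℝ) ≤ (n.descFactorial m : ℝ) := Nat.cast_nonneg _
      have hc : (0:ℝ) ≤ ((n - k - m : ℕ) : ℝ) := Nat.cast_nonneg _
      calc (1 - ((m:ℝ)+1)*k/n) * (((n-m : ℕ):ℝ) * (n.descFactorial m : ℝ))
          = ((1 - ((m:ℝ)+1)*k/n) * ((n:ℝ) - m)) * (n.descFactorial m : ℝ) := by rw [hsub1]; ring
        _ ≤ ((1 - (m:ℝ)*k/n) * ((n - k - m : ℕ) : ℝ)) * (n.descFactorial m : ℝ) :=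
            mul_le_mul_of_nonneg_right key hD
        _ = ((n - k - m : ℕ) : ℝ) * ((1 - (m:ℝ)*k/n) * (n.descFactorial m : ℝ)) := by ring
        _ ≤ ((n - k - m : ℕ) : ℝ) * ((n-k).descFactorial m : ℝ) :=
            mul_le_mul_of_nonneg_left ih' hc

private lemma descB (n k : ℕ) (hk : 1 ≤ k) (hkn : k ≤ n) :
    ∀ m, m ≤ k → ((n-k).descFactorial m : ℝ) ≤ (1 - (k:ℝ)/n)^m * (n.descFactorial m : ℝ) := by
  have hn : (0:ℝ) < n := by exact_mod_cast lt_of_lt_of_le hk hkn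
  have hx : (0:ℝ) ≤ 1 - (k:ℝ)/n := by
    have : (k:ℝ)/n ≤ 1 := by
      rw [div_le_one hn]; exact_mod_cast hkn
    linarith
  intro m
  induction m with
  | zero => simp
  | succ m ih =>
    intro hm
    have ih' := ih (by omega)
    rw [Nat.descFactorial_succ, Nat.descFactorial_succ]
    push_cast
    have hfac : ((n - k - m : ℕ) : ℝ) ≤ (1 - (k:ℝ)/n) * ((n - m : ℕ) : ℝ) := by
      have hsub1 : ((n - m : ℕ) : ℝ) = (n:ℝ) - m := by
        have : m ≤ n := by omega
        exact Nat.cast_sub this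
      by_cases h : k + m ≤ n
      · have e : ((n - k - m : ℕ) : ℝ) = (n:ℝ) - k - m := by
          have e2 : n - k - m = n - (k+m) := by omega
          rw [e2]
          have := Nat.cast_sub (R := ℝ) h
          push_cast at this ⊢
          linarith
        rw [e, hsub1]
        have hdiff : (1 - (k:ℝ)/n) * ((n:ℝ) - m) - ((n:ℝ) - k - m) = (k:ℝ)*m/n := by
          field_simp; ring
        have hpos2 : (0:ℝ) ≤ (k:ℝ)*m/n := by positivity
        linarith
      · have e : n - k - m = 0 := by omega
        rw [e]
        push_cast
        rw [hsub1]
        have hmn : (m:ℝ) ≤ n := by exact_mod_cast (by omega : m ≤ n)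
        exact mul_nonneg hx (by linarith)
    have hD : (0:ℝ) ≤ (n.descFactorial m : ℝ) := Nat.cast_nonneg _
    have hpow : (0:ℝ) ≤ (1 - (k:ℝ)/n)^m := pow_nonneg hx m
    calc ((n - k - m : ℕ) : ℝ) * ((n-k).descFactorial m : ℝ)
        ≤ ((n - k - m : ℕ) : ℝ) * ((1 - (k:ℝ)/n)^m * (n.descFactorial m : ℝ)) :=
          mul_le_mul_of_nonneg_left ih' (Nat.cast_nonneg _)
      _ ≤ ((1 - (k:ℝ)/n) * ((n - m : ℕ) : ℝ)) * ((1 - (k:ℝ)/n)^m * (n.descFactorial m : ℝ)) := by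
          apply mul_le_mul_of_nonneg_right hfac (by positivity)
      _ = (1 - (k:ℝ)/n)^(m+1) * (((n - m : ℕ) : ℝ) * (n.descFactorial m : ℝ)) := by ring

private lemma powC (x : ℝ) (hx0 : 0 ≤ x) (hx1 : x ≤ 1) :
    ∀ m : ℕ, (1-x)^m ≤ 1 - m*x + m*((m:ℝ)-1)/2*x^2 := by
  intro m
  induction m with
  | zero => norm_num
  | succ m ih =>
    have h1 : (1-x)^(m+1) = (1-x) * (1-x)^m := by ring
    have h2 : (1-x) * (1-x)^m ≤ (1-x) * (1 - m*x + m*((m:ℝ)-1)/2*x^2) :=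
      mul_le_mul_of_nonneg_left ih (by linarith)
    have hm0 : (0:ℝ) ≤ m := Nat.cast_nonneg m
    have ha : (0:ℝ) ≤ (m:ℝ)*((m:ℝ)-1) := by
      rcases Nat.eq_zero_or_pos m with h|h
      · simp [h]
      · have h' : (1:ℝ) ≤ m := by exact_mod_cast h
        nlinarith
    have hx3 : (0:ℝ) ≤ x^3 := by positivity
    push_cast
    nlinarith [h1, h2, mul_nonneg ha hx3]

/-- Two-sided bound on the probability that a uniformly random `k`-element subset of
`{1,…,n}` intersects a fixed `k`-element subset, used in Lemmas 1–3 of the paper. -/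
theorem stmt_6 (n k : ℕ) (hk : 1 ≤ k) (hkn : k ≤ n) :
    (k : ℝ) ^ 2 / (n : ℝ) - (k : ℝ) ^ 4 / (2 * (n : ℝ) ^ 2)
        ≤ 1 - (Nat.choose (n - k) k : ℝ) / (Nat.choose n k : ℝ) ∧
      1 - (Nat.choose (n - k) k : ℝ) / (Nat.choose n k : ℝ) ≤ (k : ℝ) ^ 2 / (n : ℝ) := by
  have hn : (0:ℝ) < n := by exact_mod_cast lt_of_lt_of_le hk hkn
  have hk1 : (1:ℝ) ≤ k := by exact_mod_cast hk
  have hD : (0:ℝ) < (n.descFactorial k : ℝ) := by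
    have : n.descFactorial k ≠ 0 := by
      rw [Ne, Nat.descFactorial_eq_zero_iff_lt]; omega
    exact_mod_cast Nat.pos_of_ne_zero this
  have hCh : (0:ℝ) < (n.choose k : ℝ) := by
    exact_mod_cast Nat.choose_pos hkn
  -- ratio equals descFactorial ratio
  have hratio : (Nat.choose (n - k) k : ℝ) / (Nat.choose n k : ℝ)
      = ((n-k).descFactorial k : ℝ) / (n.descFactorial k : ℝ) := by
    have e1 : ((n-k).descFactorial k : ℝ) = (Nat.factorial k : ℝ) * ((n-k).choose k : ℝ) := by
      exact_mod_cast Nat.descFactorial_eq_factorial_mul_choose (n-k) k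
    have e2 : (n.descFactorial k : ℝ) = (Nat.factorial k : ℝ) * (n.choose k : ℝ) := by
      exact_mod_cast Nat.descFactorial_eq_factorial_mul_choose n k
    have hf : (0:ℝ) < (Nat.factorial k : ℝ) := by exact_mod_cast Nat.factorial_pos k
    rw [e1, e2, mul_div_mul_left _ _ (ne_of_gt hf)]
  rw [hratio]
  have hA := descA n k hk hkn k le_rfl
  have hB := descB n k hk hkn k le_rfl
  have hx0 : (0:ℝ) ≤ (k:ℝ)/n := by positivity
  have hx1 : (k:ℝ)/n ≤ 1 := by rw [div_le_one hn]; exact_mod_cast hkn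
  have hC := powC ((k:ℝ)/n) hx0 hx1 k
  constructor
  · -- lower bound: need desc' ≤ (1 - k²/n + k⁴/(2n²)) * D
    have step : (1 - (k:ℝ)/n)^k ≤ 1 - (k:ℝ)^2/n + (k:ℝ)^4/(2*(n:ℝ)^2) := by
      have h2 : 1 - (k:ℝ)*((k:ℝ)/n) + (k:ℝ)*((k:ℝ)-1)/2*((k:ℝ)/n)^2
          ≤ 1 - (k:ℝ)^2/n + (k:ℝ)^4/(2*(n:ℝ)^2) := by
        have e1 : (k:ℝ)*((k:ℝ)/n) = (k:ℝ)^2/n := by field_simp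
        have e2 : (k:ℝ)*((k:ℝ)-1)/2*((k:ℝ)/n)^2 = (k:ℝ)^3*((k:ℝ)-1)/(2*(n:ℝ)^2) := by
          field_simp
        rw [e1, e2]
        have hnum : (k:ℝ)^3*((k:ℝ)-1) ≤ (k:ℝ)^4 := by nlinarith
        have h2n : (0:ℝ) < 2*(n:ℝ)^2 := by positivity
        have := (div_le_div_iff_of_pos_right h2n).mpr hnum
        linarith
      exact hC.trans h2
    have hfin : ((n-k).descFactorial k : ℝ)
        ≤ (1 - ((k:ℝ)^2/n - (k:ℝ)^4/(2*(n:ℝ)^2))) * (n.descFactorial k : ℝ) := by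
      calc ((n-k).descFactorial k : ℝ) ≤ (1 - (k:ℝ)/n)^k * (n.descFactorial k : ℝ) := hB
        _ ≤ (1 - (k:ℝ)^2/n + (k:ℝ)^4/(2*(n:ℝ)^2)) * (n.descFactorial k : ℝ) :=
            mul_le_mul_of_nonneg_right step (le_of_lt hD)
        _ = (1 - ((k:ℝ)^2/n - (k:ℝ)^4/(2*(n:ℝ)^2))) * (n.descFactorial k : ℝ) := by ring
    have hdiv := (div_le_iff₀ hD).mpr hfin
    linarith
  · -- upper bound
    rw [sub_le_iff_le_add', ← sub_le_iff_le_add, le_div_iff₀ hD]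
    calc (1 - (k:ℝ)^2/n) * (n.descFactorial k : ℝ)
        = (1 - (k:ℝ)*k/n) * (n.descFactorial k : ℝ) := by ring
      _ ≤ ((n-k).descFactorial k : ℝ) := hA
end

section
/- Fix integers n and k with 1 ≤ k ≤ n and a real α with 0 < α ≤ 1. Let S be a uniformly random k-element subset of {1,…,n} and let B be a Bernoulli(α) random variable independent of S. Define the random vector A ∈ {0,1}^k by A_i = B·1{i ∈ S} for i = 1,…,k, and let p = 1 − C(n−k,k)/C(n,k) (with C(n−k,k) = 0 if k > n−k). If α·C(n,k)·p² ≤ 1, then for every pair of nondecreasing functions f, g : {0,1}^k → {0,1} (with the componentwise partial order on {0,1}^k), E[f(A)·g(A)] ≥ E[f(A)]·E[g(A)]. -/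
/-- The "Poisson oversampling" balls-and-bins association result at the heart of the proof of
Theorem 2 of the paper.  With probability `α`, `k` balls are thrown into `k` distinct bins
chosen uniformly at random among `n` bins (a uniformly random `k`-element subset `S`), and with
probability `1 - α` no balls are thrown.  The random binary vector `A ∈ {0,1}^k` records which
of the first `k` bins receive a ball.  Expectations are written out explicitly as sums over the
finite sample space (pairs of a `k`-subset `S` with weight `α / C(n,k)`, plus the no-throw
outcome with weight `1 - α`).  If `α·C(n,k)·p² ≤ 1`, where
`p = 1 - C(n-k,k)/C(n,k)` is the probability that a thrown set of balls hits the first `k`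
bins at all, then any two nondecreasing binary-valued functions `f, g` of `A` are positively
correlated. -/
theorem stmt_7 (n k : ℕ) (hk : 1 ≤ k) (hkn : k ≤ n) (α : ℝ) (hα0 : 0 < α) (hα1 : α ≤ 1)
    (hcond : α * (Nat.choose n k : ℝ) *
        (1 - (Nat.choose (n - k) k : ℝ) / (Nat.choose n k : ℝ)) ^ 2 ≤ 1)
    (f g : (Fin k → Bool) → ℝ)
    (hf01 : ∀ v, f v = 0 ∨ f v = 1) (hg01 : ∀ v, g v = 0 ∨ g v = 1)
    (hf : Monotone f) (hg : Monotone g) :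
    (∑ S ∈ Finset.powersetCard k (Finset.univ : Finset (Fin n)),
          (α / (Nat.choose n k : ℝ)) *
            (f (fun i => decide (Fin.castLE hkn i ∈ S)) *
              g (fun i => decide (Fin.castLE hkn i ∈ S))))
        + (1 - α) * (f (fun _ => false) * g (fun _ => false))
      ≥ ((∑ S ∈ Finset.powersetCard k (Finset.univ : Finset (Fin n)),
            (α / (Nat.choose n k : ℝ)) * f (fun i => decide (Fin.castLE hkn i ∈ S)))
          + (1 - α) * f (fun _ => false)) *
        ((∑ S ∈ Finset.powersetCard k (Finset.univ : Finset (Fin n)),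
            (α / (Nat.choose n k : ℝ)) * g (fun i => decide (Fin.castLE hkn i ∈ S)))
          + (1 - α) * g (fun _ => false)) := by
  classical
  set P : Finset (Finset (Fin n)) := Finset.powersetCard k (Finset.univ : Finset (Fin n))
    with hP
  have hCpos : (0:ℝ) < (Nat.choose n k : ℝ) := by exact_mod_cast Nat.choose_pos hkn
  have hcardP : P.card = Nat.choose n k := by
    simp [hP, Finset.card_powersetCard]
  have hsumα : ∑ _S ∈ P, (α / (Nat.choose n k : ℝ)) = α := by
    rw [Finset.sum_const, hcardP, nsmul_eq_mul]
    field_simp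
  have hbotle : ∀ v : Fin k → Bool, (fun _ => false) ≤ v := fun v i => Bool.false_le _
  have hfnn : ∀ v, 0 ≤ f v := fun v => by rcases hf01 v with h | h <;> rw [h] <;> norm_num
  have hgnn : ∀ v, 0 ≤ g v := fun v => by rcases hg01 v with h | h <;> rw [h] <;> norm_num
  have hfle1 : ∀ v, f v ≤ 1 := fun v => by rcases hf01 v with h | h <;> rw [h] <;> norm_num
  have hgle1 : ∀ v, g v ≤ 1 := fun v => by rcases hg01 v with h | h <;> rw [h] <;> norm_num
  by_cases hfb : f (fun _ => false) = 1
  · -- f is identically 1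
    have hfall : ∀ v, f v = 1 := by
      intro v
      rcases hf01 v with h | h
      · have h2 := hf (hbotle v); rw [hfb, h] at h2; linarith
      · exact h
    simp only [hfall, mul_one, one_mul]
    rw [hsumα]
    have h1 : α + (1 - α) = 1 := by ring
    rw [h1, one_mul]
  by_cases hgb : g (fun _ => false) = 1
  · -- g is identically 1
    have hgall : ∀ v, g v = 1 := by
      intro v
      rcases hg01 v with h | h
      · have h2 := hg (hbotle v); rw [hgb, h] at h2; linarith
      · exact h
    simp only [hgall, mul_one]
    rw [hsumα]
    have h1 : α + (1 - α) = 1 := by ring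
    rw [h1, mul_one]
  -- main case: f and g vanish at the bottom
  have hfb0 : f (fun _ => false) = 0 := (hf01 _).resolve_right hfb
  have hgb0 : g (fun _ => false) = 0 := (hg01 _).resolve_right hgb
  rw [hfb0, hgb0]
  simp only [mul_zero, zero_mul, add_zero]
  rw [← Finset.mul_sum, ← Finset.mul_sum, ← Finset.mul_sum]
  set c : ℝ := α / (Nat.choose n k : ℝ) with hc
  have hcpos : 0 < c := div_pos hα0 hCpos
  set F : ℝ := ∑ S ∈ P, f (fun i => decide (Fin.castLE hkn i ∈ S)) with hF
  set G : ℝ := ∑ S ∈ P, g (fun i => decide (Fin.castLE hkn i ∈ S)) with hG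
  set FG : ℝ := ∑ S ∈ P, (f (fun i => decide (Fin.castLE hkn i ∈ S)) *
      g (fun i => decide (Fin.castLE hkn i ∈ S))) with hFG
  have hFnn : 0 ≤ F := Finset.sum_nonneg fun S _ => hfnn _
  have hGnn : 0 ≤ G := Finset.sum_nonneg fun S _ => hgnn _
  have hFGnn : 0 ≤ FG := Finset.sum_nonneg fun S _ => mul_nonneg (hfnn _) (hgnn _)
  by_cases hF0 : F = 0
  · rw [hF0, mul_zero, zero_mul]
    exact mul_nonneg hcpos.le hFGnn
  by_cases hG0 : G = 0
  · rw [hG0, mul_zero, mul_zero]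
    exact mul_nonneg hcpos.le hFGnn
  -- both F and G positive; the top subset
  obtain ⟨S1, hS1P, hS1⟩ := Finset.exists_ne_zero_of_sum_ne_zero (by rw [← hF]; exact hF0)
  obtain ⟨S2, hS2P, hS2⟩ := Finset.exists_ne_zero_of_sum_ne_zero (by rw [← hG]; exact hG0)
  have hftop : f (fun _ => true) = 1 := by
    have h1 : f (fun i => decide (Fin.castLE hkn i ∈ S1)) = 1 := (hf01 _).resolve_left hS1
    have hle : f (fun i => decide (Fin.castLE hkn i ∈ S1)) ≤ f (fun _ => true) :=
      hf fun i => Bool.le_true _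
    rcases hf01 (fun _ => true) with h | h
    · rw [h1, h] at hle; linarith
    · exact h
  have hgtop : g (fun _ => true) = 1 := by
    have h1 : g (fun i => decide (Fin.castLE hkn i ∈ S2)) = 1 := (hg01 _).resolve_left hS2
    have hle : g (fun i => decide (Fin.castLE hkn i ∈ S2)) ≤ g (fun _ => true) :=
      hg fun i => Bool.le_true _
    rcases hg01 (fun _ => true) with h | h
    · rw [h1, h] at hle; linarith
    · exact h
  set S0 : Finset (Fin n) :=
    Finset.map ⟨Fin.castLE hkn, Fin.castLE_injective hkn⟩ Finset.univ with hS0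
  have hS0card : S0.card = k := by simp [hS0]
  have hS0P : S0 ∈ P := by
    rw [hP, Finset.mem_powersetCard]
    exact ⟨Finset.subset_univ _, hS0card⟩
  have hmemS0 : ∀ i : Fin k, Fin.castLE hkn i ∈ S0 :=
    fun i => Finset.mem_map_of_mem _ (Finset.mem_univ i)
  have hvecS0 : (fun i => decide (Fin.castLE hkn i ∈ S0)) = (fun _ : Fin k => true) := by
    funext i; simp [hmemS0 i]
  have hFG1 : 1 ≤ FG := by
    have h := Finset.single_le_sum
      (f := fun S => f (fun i => decide (Fin.castLE hkn i ∈ S)) *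
        g (fun i => decide (Fin.castLE hkn i ∈ S)))
      (fun S _ => mul_nonneg (hfnn _) (hgnn _)) hS0P
    simp only [hvecS0, hftop, hgtop, mul_one] at h
    rw [hFG]; exact h
  -- counting: subsets disjoint from S0
  have hDfilter : Finset.filter (fun S => Disjoint S S0) P = Finset.powersetCard k S0ᶜ := by
    ext S
    rw [Finset.mem_filter, hP, Finset.mem_powersetCard, Finset.mem_powersetCard]
    constructor
    · rintro ⟨⟨-, hcard⟩, hd⟩
      refine ⟨fun a ha => Finset.mem_compl.2 (Finset.disjoint_left.1 hd ha), hcard⟩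
    · rintro ⟨hsub, hcard⟩
      refine ⟨⟨Finset.subset_univ _, hcard⟩, Finset.disjoint_left.2 fun a ha ha' =>
        Finset.mem_compl.1 (hsub ha) ha'⟩
  have hDcard : (Finset.filter (fun S => Disjoint S S0) P).card = Nat.choose (n - k) k := by
    rw [hDfilter, Finset.card_powersetCard, Finset.card_compl, hS0card, Fintype.card_fin]
  have hcount : (Finset.filter (fun S => ¬ Disjoint S S0) P).card
      = Nat.choose n k - Nat.choose (n - k) k := by
    have h := Finset.card_filter_add_card_filter_not (s := P)
      (p := fun S => Disjoint S S0)
    rw [hcardP, hDcard] at h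
    omega
  have hchle : Nat.choose (n - k) k ≤ Nat.choose n k :=
    Nat.choose_le_choose k (Nat.sub_le n k)
  have hsumle : ∀ (h : (Fin k → Bool) → ℝ), (∀ v, 0 ≤ h v) → (∀ v, h v ≤ 1) →
      h (fun _ => false) = 0 →
      ∑ S ∈ P, h (fun i => decide (Fin.castLE hkn i ∈ S))
        ≤ (Nat.choose n k : ℝ) - (Nat.choose (n - k) k : ℝ) := by
    intro h hnn hle1 h0
    have hsplit := Finset.sum_filter_add_sum_filter_not P (fun S => Disjoint S S0)
      (fun S => h (fun i => decide (Fin.castLE hkn i ∈ S)))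
    have hzero : ∑ S ∈ P.filter (fun S => Disjoint S S0),
        h (fun i => decide (Fin.castLE hkn i ∈ S)) = 0 := by
      apply Finset.sum_eq_zero
      intro S hS
      have hd : Disjoint S S0 := (Finset.mem_filter.1 hS).2
      have hv : (fun i => decide (Fin.castLE hkn i ∈ S)) = (fun _ : Fin k => false) := by
        funext i
        have : Fin.castLE hkn i ∉ S := Finset.disjoint_right.1 hd (hmemS0 i)
        simp [this]
      rw [hv, h0]
    have hbound : ∑ S ∈ P.filter (fun S => ¬ Disjoint S S0),
        h (fun i => decide (Fin.castLE hkn i ∈ S))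
        ≤ ((P.filter (fun S => ¬ Disjoint S S0)).card : ℝ) := by
      have := Finset.sum_le_card_nsmul (P.filter (fun S => ¬ Disjoint S S0))
        (fun S => h (fun i => decide (Fin.castLE hkn i ∈ S))) 1 (fun S _ => hle1 _)
      rwa [nsmul_eq_mul, mul_one] at this
    have hcast : ((P.filter (fun S => ¬ Disjoint S S0)).card : ℝ)
        = (Nat.choose n k : ℝ) - (Nat.choose (n - k) k : ℝ) := by
      rw [hcount]
      push_cast [Nat.cast_sub hchle]
      ring
    calc ∑ S ∈ P, h (fun i => decide (Fin.castLE hkn i ∈ S))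
        = (∑ S ∈ P.filter (fun S => Disjoint S S0),
            h (fun i => decide (Fin.castLE hkn i ∈ S)))
          + ∑ S ∈ P.filter (fun S => ¬ Disjoint S S0),
            h (fun i => decide (Fin.castLE hkn i ∈ S)) := hsplit.symm
      _ ≤ 0 + ((P.filter (fun S => ¬ Disjoint S S0)).card : ℝ) := by
          rw [hzero]; exact add_le_add le_rfl hbound
      _ = (Nat.choose n k : ℝ) - (Nat.choose (n - k) k : ℝ) := by rw [hcast, zero_add]
  set D : ℝ := (Nat.choose n k : ℝ) - (Nat.choose (n - k) k : ℝ) with hD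
  have hFle : F ≤ D := hsumle f hfnn hfle1 hfb0
  have hGle : G ≤ D := hsumle g hgnn hgle1 hgb0
  have hDnn : 0 ≤ D := le_trans hFnn hFle
  have hcondD : c * (D * D) ≤ 1 := by
    have heq : α * (Nat.choose n k : ℝ) *
        (1 - (Nat.choose (n - k) k : ℝ) / (Nat.choose n k : ℝ)) ^ 2 = c * (D * D) := by
      rw [hc, hD]
      field_simp
    rw [← heq]; exact hcond
  have hkey : c * (F * G) ≤ 1 := by
    refine le_trans ?_ hcondD
    exact mul_le_mul_of_nonneg_left (mul_le_mul hFle hGle hGnn hDnn) hcpos.le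
  calc (c * F) * (c * G) = c * (c * (F * G)) := by ring
    _ ≤ c * 1 := mul_le_mul_of_nonneg_left hkey hcpos.le
    _ = c := mul_one c
    _ ≤ c * FG := le_mul_of_one_le_right hcpos.le hFG1
end

section
/- Fix integers n and k with 1 ≤ k ≤ n and a real α with 0 < α ≤ 1. Let S be a uniformly random k-element subset of {1,…,n} and let B be a Bernoulli(α) random variable independent of S. Define the random vector A ∈ {0,1}^k by A_i = B·1{i ∈ S} for i = 1,…,k, and let p = 1 − C(n−k,k)/C(n,k) (with C(n−k,k) = 0 if k > n−k). If α·C(n,k)·p² ≤ 1, then P(A_1 = 1, A_2 = 1, …, A_k = 1) ≥ ∏_{i=1}^{k} P(A_i = 1), i.e., α/C(n,k) ≥ (α·k/n)^k. -/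
lemma stmt_8_aux (a b c : ℝ) (ha : 0 < a) (hb : 0 < b) (hc : 0 < c) (m : ℕ) :
    (a^2/(c*b^2))^(m+1) * (b/a)^(m+2) = (a/(c*b))^m / c := by
  induction m with
  | zero => simp only [zero_add, pow_one, pow_zero]; field_simp
  | succ i ih =>
      have h : (a^2/(c*b^2))^(i+1+1) * (b/a)^(i+1+2)
          = (a^2/(c*b^2)) * ((a^2/(c*b^2))^(i+1) * (b/a)^(i+2)) * (b/a) := by ring
      rw [h, ih, pow_succ]
      field_simp
      rw [pow_succ]
      field_simp

/-- A consequence of the "Poisson oversampling" association result in the proof of Theorem 2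
of the paper: for the random binary vector `A` (with `P(A = (1,…,1)) = α/C(n,k)` and
`P(A_i = 1) = αk/n`), if `α·C(n,k)·p² ≤ 1` with `p = 1 - C(n-k,k)/C(n,k)`, then
`P(A_1 = 1, …, A_k = 1) ≥ ∏ᵢ P(A_i = 1)`, i.e. `α/C(n,k) ≥ (αk/n)^k`. -/
theorem stmt_8 (n k : ℕ) (hk : 1 ≤ k) (hkn : k ≤ n) (α : ℝ) (hα0 : 0 < α) (hα1 : α ≤ 1)
    (hcond : α * (Nat.choose n k : ℝ) *
        (1 - (Nat.choose (n - k) k : ℝ) / (Nat.choose n k : ℝ)) ^ 2 ≤ 1) :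
    α / (Nat.choose n k : ℝ) ≥ (α * (k : ℝ) / (n : ℝ)) ^ k := by
  have hn : 0 < n := hk.trans hkn
  have hnR : (0:ℝ) < n := by exact_mod_cast hn
  have hkR : (0:ℝ) < k := by exact_mod_cast hk
  have hC0 : 0 < Nat.choose n k := Nat.choose_pos hkn
  have hCR : (0:ℝ) < (Nat.choose n k : ℝ) := by exact_mod_cast hC0
  -- n ≤ C(n,k) * k
  have h1n : n * Nat.choose (n-1) (k-1) = Nat.choose n k * k := by
    have := Nat.add_one_mul_choose_eq (n-1) (k-1)
    simpa only [Nat.succ_eq_add_one, Nat.sub_add_cancel hn, Nat.sub_add_cancel hk] using this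
  have h1 : n ≤ Nat.choose n k * k := by
    calc n = n * 1 := (mul_one n).symm
    _ ≤ n * Nat.choose (n-1) (k-1) :=
        Nat.mul_le_mul_left n (Nat.choose_pos (by omega))
    _ = Nat.choose n k * k := h1n
  have h1R : (n:ℝ) ≤ (Nat.choose n k : ℝ) * k := by exact_mod_cast h1
  -- n * C(n-k,k) ≤ C(n,k) * (n-k)
  have h2 : n * Nat.choose (n-k) k ≤ Nat.choose n k * (n-k) := by
    have e1 : n * Nat.choose (n-1) k = Nat.choose n (k+1) * (k+1) := by
      have := Nat.add_one_mul_choose_eq (n-1) k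
      simpa only [Nat.succ_eq_add_one, Nat.sub_add_cancel hn] using this
    calc n * Nat.choose (n-k) k ≤ n * Nat.choose (n-1) k :=
        Nat.mul_le_mul_left n (Nat.choose_le_choose k (by omega))
    _ = Nat.choose n k * (n-k) := by rw [e1, Nat.choose_succ_right_eq]
  have h2R : (n:ℝ) * (Nat.choose (n-k) k : ℝ) ≤ (Nat.choose n k : ℝ) * ((n:ℝ) - k) := by
    rw [← Nat.cast_sub hkn]
    exact_mod_cast h2
  set C : ℝ := (Nat.choose n k : ℝ) with hCdef
  set p : ℝ := 1 - (Nat.choose (n-k) k : ℝ) / C with hpdef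
  -- p ≥ k/n
  have hp : (k:ℝ)/n ≤ p := by
    rw [hpdef, le_sub_iff_add_le, div_add_div _ _ (ne_of_gt hnR) (ne_of_gt hCR),
      div_le_one (by positivity)]
    nlinarith [h2R]
  have hp0 : (0:ℝ) < p := lt_of_lt_of_le (by positivity) hp
  -- α ≤ n²/(C k²)
  have h' : α * C * ((k:ℝ)/n)^2 ≤ 1 := by
    refine le_trans ?_ hcond
    gcongr
  have hX : α * (C * (k:ℝ)^2) ≤ (n:ℝ)^2 := by
    have h2' := mul_le_mul_of_nonneg_right h' (by positivity : (0:ℝ) ≤ (n:ℝ)^2)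
    calc α * (C * (k:ℝ)^2) = α * C * ((k:ℝ)/n)^2 * (n:ℝ)^2 := by field_simp
    _ ≤ 1 * (n:ℝ)^2 := h2'
    _ = (n:ℝ)^2 := one_mul _
  have hXdiv : α ≤ (n:ℝ)^2 / (C * (k:ℝ)^2) := (le_div_iff₀ (by positivity)).mpr hX
  rw [ge_iff_le]
  by_cases hk1 : k = 1
  · subst hk1
    rw [hCdef, Nat.choose_one_right]
    push_cast
    rw [pow_one, mul_one]
  · have hk2 : 2 ≤ k := by omega
    obtain ⟨m, rfl⟩ : ∃ m, k = m + 2 := ⟨k - 2, by omega⟩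
    push_cast at h1R hXdiv ⊢
    have hm2 : (0:ℝ) < (m:ℝ) + 2 := by positivity
    calc (α * ((m:ℝ)+2) / n) ^ (m+2)
        = α * α^(m+1) * (((m:ℝ)+2)/n)^(m+2) := by
          rw [mul_div_assoc, mul_pow]; ring
    _ ≤ α * ((n:ℝ)^2/(C*((m:ℝ)+2)^2))^(m+1) * (((m:ℝ)+2)/n)^(m+2) := by
          gcongr
    _ = α * (((n:ℝ)/(C*((m:ℝ)+2)))^m / C) := by
          rw [mul_assoc, stmt_8_aux (n:ℝ) ((m:ℝ)+2) C hnR hm2 hCR m]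
    _ ≤ α * (1 / C) := by
          gcongr
          exact pow_le_one₀ (by positivity) ((div_le_one (by positivity)).mpr (by linarith))
    _ = α / C := by ring
end
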